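/- Let (Z_j, Z_k) be a centered bivariate Gaussian vector with unit variances and correlation ρ ∈ (−1, 1). Define the ordinal variable X_j = Σ_{m=0}^{l_j−1} m·1{Δ_{jm} ≤ Z_j < Δ_{j(m+1)}} with cutoffs −∞ = Δ_{j0} < Δ_{j1} < ⋯ < Δ_{j(l_j−1)} < Δ_{jl_j} = +∞ (l_j ≥ 2), and the binary variable X_k = 1{Z_k > Δ_k} for a cutoff Δ_k ∈ ℝ. Then the population Kendall's tau of (X_j, X_k) equals 2·Σ_{r=1}^{l_j−1} [Φ_2(Δ_{jr}, Δ_k; ρ)·Φ(Δ_{j(r+1)}) − Φ(Δ_{jr})·Φ_2(Δ_{j(r+1)}, Δ_k; ρ)], where for r = l_j − 1 one interprets Φ(Δ_{jl_j}) = Φ(+∞) = 1 and Φ_2(+∞, Δ_k; ρ) = Φ(Δ_k). (Novel bridging function for an ordinal–binary pair with an arbitrary number of levels, F_ob, from Theorem 1.) -/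

import Mathlib

open MeasureTheory ProbabilityTheory Real Matrix
open scoped ENNReal NNReal

noncomputable section

/-- Density of a centered multivariate Gaussian distribution on `ℝ^d`
with covariance matrix `S`. -/
def mvGaussPDF {d : ℕ} (S : Matrix (Fin d) (Fin d) ℝ) (x : Fin d → ℝ) : ℝ :=
  (Real.sqrt ((2 * Real.pi) ^ d * S.det))⁻¹ * Real.exp (-(x ⬝ᵥ S⁻¹ *ᵥ x) / 2)

/-- Centered multivariate Gaussian measure on `ℝ^d` with covariance matrix `S`. -/
def mvGauss {d : ℕ} (S : Matrix (Fin d) (Fin d) ℝ) : Measure (Fin d → ℝ) :=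
  MeasureTheory.volume.withDensity fun x => ENNReal.ofReal (mvGaussPDF S x)

/-- `Φ_d(a; S) = P(U₁ ≤ a₁, …, U_d ≤ a_d)` for a centered Gaussian vector `U` with
covariance matrix `S`.  Extended-real bounds implement the conventions that a `+∞`
bound drops the corresponding constraint, while a `-∞` bound gives probability `0`. -/
def PhiVec {d : ℕ} (a : Fin d → EReal) (S : Matrix (Fin d) (Fin d) ℝ) : ℝ :=
  (mvGauss S {x | ∀ i, (x i : EReal) ≤ a i}).toReal

/-- Standard normal CDF `Φ`, with extended-real argument (`Φ(+∞) = 1`, `Φ(-∞) = 0`). -/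
def stdPhi (a : EReal) : ℝ :=
  (gaussianReal 0 1 {x : ℝ | (x : EReal) ≤ a}).toReal

/-- The `2 × 2` correlation matrix with correlation `ρ`. -/
def corrMat (ρ : ℝ) : Matrix (Fin 2) (Fin 2) ℝ := !![1, ρ; ρ, 1]

/-- Bivariate standard normal CDF `Φ₂(a, b; ρ)` with extended-real bounds. -/
def Phi2 (a b : EReal) (ρ : ℝ) : ℝ := PhiVec ![a, b] (corrMat ρ)

/-- The binary variable `1{z > Δ}` obtained by dichotomizing a latent variable `z`. -/
def binVar (Δ : ℝ) (z : ℝ) : ℝ := if Δ < z then 1 else 0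

/-- The truncated variable `z · 1{z > Δ}` obtained by truncating a latent variable `z`. -/
def truncVar (Δ : ℝ) (z : ℝ) : ℝ := if Δ < z then z else 0

/-- The ordinal variable `∑_{m=0}^{l-1} m · 1{Δ_m ≤ z < Δ_{m+1}}` obtained from a latent
variable `z` via extended-real cutoffs `Δ`. -/
def ordVar (l : ℕ) (Δ : ℕ → EReal) (z : ℝ) : ℝ :=
  ∑ m ∈ Finset.range l,
    (m : ℝ) * (if Δ m ≤ (z : EReal) ∧ (z : EReal) < Δ (m + 1) then 1 else 0)

lemma corr_det (ρ : ℝ) : (corrMat ρ).det = 1 - ρ^2 := by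
  simp [corrMat, Matrix.det_fin_two_of]; ring

lemma corr_inv {ρ : ℝ} (h : 1 - ρ^2 ≠ 0) :
    (corrMat ρ)⁻¹ = (1-ρ^2)⁻¹ • !![1,-ρ;-ρ,1] := by
  apply Matrix.inv_eq_right_inv
  ext i j
  fin_cases i <;> fin_cases j <;>
    simp [corrMat, Matrix.mul_apply, Fin.sum_univ_two, Matrix.smul_apply, smul_eq_mul] <;>
    field_simp <;> ring

lemma quad_form {ρ : ℝ} (h : 1 - ρ^2 ≠ 0) (x : Fin 2 → ℝ) :
    x ⬝ᵥ (corrMat ρ)⁻¹ *ᵥ x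
      = (x 0)^2 + ((x 1) - ρ * (x 0))^2 / (1 - ρ^2) := by
  rw [corr_inv h]
  simp [dotProduct, Matrix.mulVec, Fin.sum_univ_two, Matrix.smul_apply, smul_eq_mul]
  field_simp
  ring

lemma pdf_factor {ρ : ℝ} (hρ : ρ ∈ Set.Ioo (-1:ℝ) 1) (x : Fin 2 → ℝ) :
    mvGaussPDF (corrMat ρ) x
      = gaussianPDFReal 0 1 (x 0) * gaussianPDFReal (ρ * x 0) (1 - ρ^2).toNNReal (x 1) := by
  obtain ⟨h1, h2⟩ := hρ
  have hpos : (0:ℝ) < 1 - ρ^2 := by nlinarith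
  have hne : (1:ℝ) - ρ^2 ≠ 0 := ne_of_gt hpos
  have hco : ((1 - ρ^2).toNNReal : ℝ) = 1 - ρ^2 := Real.coe_toNNReal _ hpos.le
  rw [mvGaussPDF, quad_form hne, corr_det, gaussianPDFReal, gaussianPDFReal, hco]
  have hπ : (0:ℝ) < 2 * π := by positivity
  have hsq : Real.sqrt ((2*π)^2 * (1 - ρ^2)) = Real.sqrt (2*π*1) * Real.sqrt (2*π*(1-ρ^2)) := by
    rw [← Real.sqrt_mul (by positivity)]
    ring_nf
  rw [hsq, mul_inv]
  rw [mul_mul_mul_comm, ← Real.exp_add]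
  congr 1
  push_cast
  field_simp
  ring

lemma measurable_mvGaussPDF {d : ℕ} (S : Matrix (Fin d) (Fin d) ℝ) :
    Measurable (mvGaussPDF S) := by
  have hq : Measurable fun x : Fin d → ℝ => x ⬝ᵥ S⁻¹ *ᵥ x := by
    simp only [dotProduct, Matrix.mulVec]
    exact Finset.measurable_sum _ fun i _ =>
      (measurable_pi_apply i).mul
        (Finset.measurable_sum _ fun j _ => measurable_const.mul (measurable_pi_apply j))
  exact measurable_const.mul (((hq.neg).div_const 2).exp)

lemma mvGauss_marginal {ρ : ℝ} (hρ : ρ ∈ Set.Ioo (-1:ℝ) 1) :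
    Measure.map (fun x : Fin 2 → ℝ => x 0) (mvGauss (corrMat ρ)) = gaussianReal 0 1 := by
  have hpos : (0:ℝ) < 1 - ρ^2 := by obtain ⟨h1,h2⟩ := hρ; nlinarith
  set v : NNReal := (1 - ρ^2).toNNReal with hv
  have hvne : v ≠ 0 := by
    simp only [hv, ne_eq, Real.toNNReal_eq_zero, not_le]
    linarith
  ext s hs
  rw [Measure.map_apply (measurable_pi_apply 0) hs, mvGauss,
    withDensity_apply _ ((measurable_pi_apply 0) hs),
    ← lintegral_indicator ((measurable_pi_apply 0) hs) _]
  have hmp : MeasurePreserving (MeasurableEquiv.finTwoArrow : (Fin 2 → ℝ) ≃ᵐ ℝ × ℝ)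
      volume volume := volume_preserving_finTwoArrow ℝ
  set F : (Fin 2 → ℝ) → ℝ≥0∞ :=
    ((fun x : Fin 2 → ℝ => x 0) ⁻¹' s).indicator fun x => ENNReal.ofReal (mvGaussPDF (corrMat ρ) x)
    with hF
  have hFm : Measurable F :=
    Measurable.indicator (measurable_mvGaussPDF _).ennreal_ofReal ((measurable_pi_apply 0) hs)
  have key : ∫⁻ x, F x ∂(volume : Measure (Fin 2 → ℝ))
      = ∫⁻ p : ℝ × ℝ, F ![p.1, p.2] ∂(volume : Measure (ℝ × ℝ)) := by
    have hvec : Measurable fun p : ℝ × ℝ => (![p.1, p.2] : Fin 2 → ℝ) := by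
      apply measurable_pi_lambda
      intro i
      fin_cases i
      · exact measurable_fst
      · exact measurable_snd
    have : Measurable fun p : ℝ × ℝ => F ![p.1, p.2] := hFm.comp hvec
    have h := hmp.lintegral_comp (f := fun p : ℝ × ℝ => F ![p.1, p.2]) this
    rw [← h]
    apply lintegral_congr
    intro x
    simp only [MeasurableEquiv.finTwoArrow]
    congr 1
    ext i
    fin_cases i <;> rfl
  rw [key]
  have hFeq : ∀ p : ℝ × ℝ, F ![p.1, p.2]
      = (s.indicator fun a => gaussianPDF 0 1 a) p.1 * gaussianPDF (ρ * p.1) v p.2 := by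
    intro p
    by_cases hp : p.1 ∈ s
    · rw [hF]
      rw [Set.indicator_of_mem (by simpa using hp), Set.indicator_of_mem hp]
      rw [pdf_factor hρ]
      simp only [Matrix.cons_val_zero, Matrix.cons_val_one, Matrix.head_cons]
      rw [ENNReal.ofReal_mul (gaussianPDFReal_nonneg _ _ _)]
      rfl
    · rw [hF, Set.indicator_of_notMem (by simpa using hp), Set.indicator_of_notMem hp,
        zero_mul]
  simp_rw [hFeq]
  have h1 : Measurable fun a : ℝ => s.indicator (fun a => gaussianPDF 0 1 a) a :=
    (measurable_gaussianPDF 0 1).indicator hs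
  have h2 : Measurable fun p : ℝ × ℝ => gaussianPDF (ρ * p.1) v p.2 := by
    unfold gaussianPDF gaussianPDFReal
    apply Measurable.ennreal_ofReal
    fun_prop
  have hm12 : Measurable fun p : ℝ × ℝ =>
      s.indicator (fun a => gaussianPDF 0 1 a) p.1 * gaussianPDF (ρ * p.1) v p.2 :=
    (h1.comp measurable_fst).mul h2
  rw [MeasureTheory.Measure.volume_eq_prod, lintegral_prod _ hm12.aemeasurable]
  have inner : ∀ a : ℝ, ∫⁻ b, (s.indicator fun a => gaussianPDF 0 1 a) a * gaussianPDF (ρ * a) v b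
      = (s.indicator fun a => gaussianPDF 0 1 a) a := by
    intro a
    rw [lintegral_const_mul _ (measurable_gaussianPDF _ _), lintegral_gaussianPDF_eq_one _ hvne,
      mul_one]
  simp_rw [inner]
  rw [lintegral_indicator hs _, gaussianReal_apply _ (by norm_num) s]

lemma mvGauss_prob {ρ : ℝ} (hρ : ρ ∈ Set.Ioo (-1:ℝ) 1) :
    IsProbabilityMeasure (mvGauss (corrMat ρ)) := by
  constructor
  have h1 : (gaussianReal 0 1 : Measure ℝ) Set.univ = 1 := measure_univ
  rw [← mvGauss_marginal hρ, Measure.map_apply (measurable_pi_apply 0) MeasurableSet.univ,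
    Set.preimage_univ] at h1
  exact h1

lemma mvGauss_null_line {ρ : ℝ} (hρ : ρ ∈ Set.Ioo (-1:ℝ) 1) (c : ℝ) :
    mvGauss (corrMat ρ) {x | x 0 = c} = 0 := by
  have hpre : {x : Fin 2 → ℝ | x 0 = c} = (fun x : Fin 2 → ℝ => x 0) ⁻¹' {c} := by
    ext x; simp
  rw [hpre, ← Measure.map_apply (measurable_pi_apply 0) (measurableSet_singleton c),
    mvGauss_marginal hρ]
  exact (gaussianReal_absolutelyContinuous 0 one_ne_zero) (measure_singleton c)

lemma mvGauss_null_ereal {ρ : ℝ} (hρ : ρ ∈ Set.Ioo (-1:ℝ) 1) (e : EReal) :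
    mvGauss (corrMat ρ) {x | (x 0 : EReal) = e} = 0 := by
  induction e using EReal.rec with
  | bot =>
      rw [show {x : Fin 2 → ℝ | (x 0 : EReal) = ⊥} = ∅ by ext x; simp [EReal.coe_ne_bot]]
      exact measure_empty
  | coe c =>
      rw [show {x : Fin 2 → ℝ | (x 0 : EReal) = (c:ℝ)} = {x | x 0 = c} by
        ext x; simp [EReal.coe_eq_coe_iff]]
      exact mvGauss_null_line hρ c
  | top =>
      rw [show {x : Fin 2 → ℝ | (x 0 : EReal) = ⊤} = ∅ by ext x; simp [EReal.coe_ne_top]]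
      exact measure_empty

lemma measurableSet_le_ereal {i : Fin 2} (a : EReal) :
    MeasurableSet {x : Fin 2 → ℝ | (x i : EReal) ≤ a} :=
  (measurable_coe_real_ereal.comp (measurable_pi_apply i)) measurableSet_Iic

lemma measurableSet_lt_ereal {i : Fin 2} (a : EReal) :
    MeasurableSet {x : Fin 2 → ℝ | (x i : EReal) < a} :=
  (measurable_coe_real_ereal.comp (measurable_pi_apply i)) measurableSet_Iio

lemma stdPhi_eq {ρ : ℝ} (hρ : ρ ∈ Set.Ioo (-1:ℝ) 1) (a : EReal) :
    stdPhi a = (mvGauss (corrMat ρ) {x | (x 0 : EReal) ≤ a}).toReal := by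
  have hset : {x : Fin 2 → ℝ | (x 0 : EReal) ≤ a}
      = (fun x : Fin 2 → ℝ => x 0) ⁻¹' {t : ℝ | (t : EReal) ≤ a} := rfl
  have hms : MeasurableSet {t : ℝ | (t : EReal) ≤ a} :=
    measurable_coe_real_ereal measurableSet_Iic
  rw [stdPhi, hset, ← Measure.map_apply (measurable_pi_apply 0) hms, mvGauss_marginal hρ]

lemma Phi2_eq {ρ : ℝ} (a : EReal) (Δk : ℝ) :
    Phi2 a (Δk : EReal) ρ
      = (mvGauss (corrMat ρ) {x | (x 0 : EReal) ≤ a ∧ x 1 ≤ Δk}).toReal := by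
  rw [Phi2, PhiVec]
  congr 1
  congr 1
  ext x
  rw [Set.mem_setOf_eq, Set.mem_setOf_eq, Fin.forall_fin_two]
  simp [EReal.coe_le_coe_iff]

lemma slab_toReal {ρ : ℝ} (hρ : ρ ∈ Set.Ioo (-1:ℝ) 1) {a b : EReal} (hab : a ≤ b)
    {W : Set (Fin 2 → ℝ)} (hW : MeasurableSet W) :
    (mvGauss (corrMat ρ) ({x | a ≤ (x 0 : EReal) ∧ (x 0 : EReal) < b} ∩ W)).toReal
      = (mvGauss (corrMat ρ) ({x | (x 0 : EReal) ≤ b} ∩ W)).toReal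
        - (mvGauss (corrMat ρ) ({x | (x 0 : EReal) ≤ a} ∩ W)).toReal := by
  haveI := mvGauss_prob hρ
  set ν := mvGauss (corrMat ρ) with hν
  set Sa := {x : Fin 2 → ℝ | (x 0 : EReal) ≤ a} ∩ W with hSa
  set Sb := {x : Fin 2 → ℝ | (x 0 : EReal) ≤ b} ∩ W with hSb
  set T := {x : Fin 2 → ℝ | a ≤ (x 0 : EReal) ∧ (x 0 : EReal) < b} ∩ W with hT
  have hsub : Sa ⊆ Sb := Set.inter_subset_inter_left W fun x hx => le_trans hx hab
  have hmSa : MeasurableSet Sa := (measurableSet_le_ereal a).inter hW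
  have hae : T =ᵐ[ν] (Sb \ Sa : Set (Fin 2 → ℝ)) := by
    rw [MeasureTheory.ae_eq_set]
    constructor
    · refine measure_mono_null ?_ (mvGauss_null_ereal hρ a)
      intro x hx
      obtain ⟨⟨hx1, hx2⟩, hxW⟩ := hx.1
      have hxb : x ∈ Sb := ⟨le_of_lt hx2, hxW⟩
      have hxa : x ∈ Sa := by
        by_contra hcon
        exact hx.2 ⟨hxb, hcon⟩
      exact le_antisymm hxa.1 hx1
    · refine measure_mono_null ?_ (mvGauss_null_ereal hρ b)
      intro x hx
      obtain ⟨⟨hxb, hxW⟩, hxna⟩ := hx.1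
      have ha' : a < (x 0 : EReal) := by
        by_contra hcon
        exact hxna ⟨le_of_not_gt hcon, hxW⟩
      have hnb : ¬ ((x 0 : EReal) < b) := by
        intro hlt
        exact hx.2 ⟨⟨le_of_lt ha', hlt⟩, hxW⟩
      exact le_antisymm hxb (le_of_not_gt hnb)
  rw [measure_congr hae, measure_diff hsub hmSa.nullMeasurableSet (measure_ne_top ν Sa),
    ENNReal.toReal_sub_of_le (measure_mono hsub) (measure_ne_top ν Sb)]

section Levels

variable {lj : ℕ} {Δj : ℕ → EReal}

lemma cut_mono (hΔjmono : ∀ m < lj, Δj m < Δj (m + 1)) :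
    ∀ j ≤ lj, ∀ i ≤ j, Δj i ≤ Δj j := by
  intro j
  induction j with
  | zero => intro _ i hi; simp [Nat.le_zero.mp hi]
  | succ n ih =>
      intro hj i hi
      rcases Nat.lt_or_ge i (n + 1) with h | h
      · exact le_trans (ih (le_trans (Nat.le_succ n) hj) i (Nat.lt_succ_iff.mp h))
          (le_of_lt (hΔjmono n (Nat.lt_of_succ_le hj)))
      · rw [le_antisymm hi h]

lemma level_unique (hΔjmono : ∀ m < lj, Δj m < Δj (m + 1)) (z : EReal) {r s : ℕ}
    (hr : r < lj) (hs : s < lj)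
    (h1 : Δj r ≤ z ∧ z < Δj (r + 1)) (h2 : Δj s ≤ z ∧ z < Δj (s + 1)) : r = s := by
  rcases lt_trichotomy r s with h | h | h
  · exfalso
    have : Δj (r + 1) ≤ Δj s := cut_mono hΔjmono s (le_of_lt hs) (r + 1) h
    exact absurd (lt_of_lt_of_le h1.2 (le_trans this h2.1)) (lt_irrefl z)
  · exact h
  · exfalso
    have : Δj (s + 1) ≤ Δj r := cut_mono hΔjmono r (le_of_lt hr) (s + 1) h
    exact absurd (lt_of_lt_of_le h2.2 (le_trans this h1.1)) (lt_irrefl z)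

lemma exists_level (hlj : 1 ≤ lj) (hΔj0 : Δj 0 = ⊥) (hΔjl : Δj lj = ⊤)
    (hΔjmono : ∀ m < lj, Δj m < Δj (m + 1)) (z : ℝ) :
    ∃ r, r < lj ∧ Δj r ≤ (z : EReal) ∧ (z : EReal) < Δj (r + 1) := by
  classical
  set F := (Finset.range lj).filter (fun i => Δj i ≤ (z : EReal)) with hF
  have h0F : 0 ∈ F := by
    simp only [hF, Finset.mem_filter, Finset.mem_range, hΔj0]
    exact ⟨hlj, bot_le⟩
  have hne : F.Nonempty := ⟨0, h0F⟩
  set r := F.max' hne with hr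
  have hrF : r ∈ F := F.max'_mem hne
  have hrlt : r < lj := (Finset.mem_filter.mp hrF).1 |> Finset.mem_range.mp
  have hrle : Δj r ≤ (z : EReal) := (Finset.mem_filter.mp hrF).2
  refine ⟨r, hrlt, hrle, ?_⟩
  rcases Nat.lt_or_ge (r + 1) lj with h | h
  · by_contra hcon
    have : r + 1 ∈ F := by
      simp only [hF, Finset.mem_filter, Finset.mem_range]
      exact ⟨h, le_of_not_gt hcon⟩
    have := F.le_max' (r + 1) this
    omega
  · have : r + 1 = lj := le_antisymm (Nat.succ_le_of_lt hrlt) h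
    rw [this, hΔjl]
    exact EReal.coe_lt_top z

lemma ordVar_eq_level (hΔjmono : ∀ m < lj, Δj m < Δj (m + 1)) {z : ℝ} {r : ℕ} (hr : r < lj)
    (hz : Δj r ≤ (z : EReal) ∧ (z : EReal) < Δj (r + 1)) : ordVar lj Δj z = r := by
  rw [ordVar]
  rw [Finset.sum_eq_single r]
  · rw [if_pos hz, mul_one]
  · intro m hm hmr
    rw [if_neg, mul_zero]
    intro hcon
    exact hmr (level_unique hΔjmono (z : EReal) (Finset.mem_range.mp hm) hr hcon hz)
  · intro hcon
    exact absurd (Finset.mem_range.mpr hr) hcon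

end Levels

lemma double_sum_symm (F : ℕ → ℕ → ℝ) (hsymm : ∀ r s, F r s = F s r)
    (hdiag : ∀ r, F r r = 0) (n : ℕ) :
    ∑ r ∈ Finset.range n, ∑ s ∈ Finset.range n, F r s
      = 2 * ∑ r ∈ Finset.range n, ∑ s ∈ Finset.range r, F r s := by
  induction n with
  | zero => simp
  | succ n ih =>
      rw [Finset.sum_range_succ]
      have hinner : ∀ r, ∑ s ∈ Finset.range (n + 1), F r s
          = (∑ s ∈ Finset.range n, F r s) + F r n := fun r => Finset.sum_range_succ _ _
      simp_rw [hinner]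
      rw [Finset.sum_add_distrib, ih, Finset.sum_range_succ (fun r => ∑ s ∈ Finset.range r, F r s)]
      have : ∑ r ∈ Finset.range n, F r n = ∑ s ∈ Finset.range n, F n s := by
        apply Finset.sum_congr rfl
        intro r _
        exact hsymm r n
      rw [this, hdiag]
      ring

lemma indicator_mul_indicator_one {α : Type*} (s t : Set α) (x : α) :
    s.indicator (fun _ => (1:ℝ)) x * t.indicator (fun _ => (1:ℝ)) x
      = (s ∩ t).indicator (fun _ => (1:ℝ)) x := by
  classical
  by_cases hs : x ∈ s <;> by_cases ht : x ∈ t <;>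
    simp [Set.indicator_apply, hs, ht, Set.mem_inter_iff]

lemma measurable_ordVar (lj : ℕ) (Δj : ℕ → EReal) :
    Measurable fun x : Fin 2 → ℝ => ordVar lj Δj (x 0) := by
  apply Finset.measurable_sum
  intro m _
  apply Measurable.const_mul
  apply Measurable.ite _ measurable_const measurable_const
  exact ((measurable_coe_real_ereal.comp (measurable_pi_apply 0)) measurableSet_Ici).inter
    ((measurable_coe_real_ereal.comp (measurable_pi_apply 0)) measurableSet_Iio)

lemma measurable_binVar (Δk : ℝ) :
    Measurable fun x : Fin 2 → ℝ => binVar Δk (x 1) := by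
  apply Measurable.ite _ measurable_const measurable_const
  exact (measurable_pi_apply 1) measurableSet_Ioi

lemma measurable_sign : Measurable Real.sign := by
  unfold Real.sign
  exact Measurable.ite measurableSet_Iio measurable_const
    (Measurable.ite measurableSet_Ioi measurable_const measurable_const)

section Key

variable {lj : ℕ} {Δj : ℕ → EReal} {Δk : ℝ}

lemma key_pointwise (hlj : 1 ≤ lj) (hΔj0 : Δj 0 = ⊥) (hΔjl : Δj lj = ⊤)
    (hΔjmono : ∀ m < lj, Δj m < Δj (m + 1))
    (A : ℕ → Set (Fin 2 → ℝ)) (K : Set (Fin 2 → ℝ))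
    (hA : A = fun m => {x | Δj m ≤ (x 0 : EReal) ∧ (x 0 : EReal) < Δj (m + 1)})
    (hK : K = {x | Δk < x 1}) (x y : Fin 2 → ℝ) :
    Real.sign ((ordVar lj Δj (x 0) - ordVar lj Δj (y 0)) *
        (binVar Δk (x 1) - binVar Δk (y 1)))
      = ∑ r ∈ Finset.range lj, ∑ s ∈ Finset.range lj,
          Real.sign ((r : ℝ) - (s : ℝ)) *
            ((A r ∩ K).indicator (fun _ => (1:ℝ)) x * (A s).indicator (fun _ => (1:ℝ)) y
              - (A r).indicator (fun _ => (1:ℝ)) x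
                * ((A s ∩ K).indicator (fun _ => (1:ℝ)) y)) := by
  classical
  obtain ⟨r₀, hr₀, hx⟩ := exists_level hlj hΔj0 hΔjl hΔjmono (x 0)
  obtain ⟨s₀, hs₀, hy⟩ := exists_level hlj hΔj0 hΔjl hΔjmono (y 0)
  have hxA : x ∈ A r₀ := by rw [hA]; exact hx
  have hyA : y ∈ A s₀ := by rw [hA]; exact hy
  have hxnA : ∀ r < lj, r ≠ r₀ → x ∉ A r := by
    intro r hr hne hmem
    rw [hA] at hmem
    exact hne (level_unique hΔjmono _ hr hr₀ hmem hx)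
  have hynA : ∀ s < lj, s ≠ s₀ → y ∉ A s := by
    intro s hs hne hmem
    rw [hA] at hmem
    exact hne (level_unique hΔjmono _ hs hs₀ hmem hy)
  rw [Finset.sum_eq_single r₀]
  · rw [Finset.sum_eq_single s₀]
    · -- main term
      have h1 : (A r₀).indicator (fun _ => (1:ℝ)) x = 1 := Set.indicator_of_mem hxA _
      have h2 : (A s₀).indicator (fun _ => (1:ℝ)) y = 1 := Set.indicator_of_mem hyA _
      have h3 : (A r₀ ∩ K).indicator (fun _ => (1:ℝ)) x = binVar Δk (x 1) := by
        by_cases hxK : x ∈ K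
        · rw [Set.indicator_of_mem (Set.mem_inter hxA hxK)]
          rw [hK] at hxK
          rw [binVar, if_pos (show Δk < x 1 from hxK)]
        · rw [Set.indicator_of_notMem (fun hc => hxK hc.2)]
          rw [hK] at hxK
          rw [binVar, if_neg (show ¬ Δk < x 1 from hxK)]
      have h4 : (A s₀ ∩ K).indicator (fun _ => (1:ℝ)) y = binVar Δk (y 1) := by
        by_cases hyK : y ∈ K
        · rw [Set.indicator_of_mem (Set.mem_inter hyA hyK)]
          rw [hK] at hyK
          rw [binVar, if_pos (show Δk < y 1 from hyK)]
        · rw [Set.indicator_of_notMem (fun hc => hyK hc.2)]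
          rw [hK] at hyK
          rw [binVar, if_neg (show ¬ Δk < y 1 from hyK)]
      rw [h1, h2, h3, h4, ordVar_eq_level hΔjmono hr₀ hx, ordVar_eq_level hΔjmono hs₀ hy]
      rw [mul_one, one_mul]
      -- sign ((r₀ - s₀) * (bx - by)) = sign (r₀ - s₀) * (bx - by)
      rcases lt_trichotomy (x 1) Δk with h | h | h
      all_goals rcases lt_trichotomy (y 1) Δk with h' | h' | h'
      all_goals simp only [binVar]
      all_goals try rw [if_neg (by linarith), if_neg (by linarith)]
      all_goals try rw [if_pos (by linarith), if_pos (by linarith)]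
      all_goals try rw [if_neg (by linarith), if_pos (by linarith)]
      all_goals try rw [if_pos (by linarith), if_neg (by linarith)]
      all_goals try (rw [sub_self, mul_zero, mul_zero, Real.sign_zero])
      all_goals try (rw [sub_zero, mul_one, mul_one])
      all_goals try (rw [zero_sub, mul_neg_one, mul_neg_one, Real.sign_neg])
    · intro s hs hne
      have e1 : (A s).indicator (fun _ => (1:ℝ)) y = 0 :=
        Set.indicator_of_notMem (hynA s (Finset.mem_range.mp hs) hne) _
      have e2 : (A s ∩ K).indicator (fun _ => (1:ℝ)) y = 0 :=
        Set.indicator_of_notMem (fun hc => (hynA s (Finset.mem_range.mp hs) hne) hc.1) _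
      rw [e1, e2]
      ring
    · intro hcon
      exact absurd (Finset.mem_range.mpr hs₀) hcon
  · intro r hr hne
    apply Finset.sum_eq_zero
    intro s _
    have e1 : (A r).indicator (fun _ => (1:ℝ)) x = 0 :=
      Set.indicator_of_notMem (hxnA r (Finset.mem_range.mp hr) hne) _
    have e2 : (A r ∩ K).indicator (fun _ => (1:ℝ)) x = 0 :=
      Set.indicator_of_notMem (fun hc => (hxnA r (Finset.mem_range.mp hr) hne) hc.1) _
    rw [e1, e2]
    ring
  · intro hcon
    exact absurd (Finset.mem_range.mpr hr₀) hcon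

end Key

lemma algebra_step (lj : ℕ) (hlj : 2 ≤ lj) (Q P B φ : ℕ → ℝ)
    (hQ : ∀ m < lj, Q m = φ (m + 1) - φ m)
    (hP : ∀ m < lj, P m = Q m - (B (m + 1) - B m))
    (hB0 : B 0 = 0) (hφ0 : φ 0 = 0) :
    ∑ r ∈ Finset.range lj, ∑ s ∈ Finset.range lj,
        Real.sign ((r : ℝ) - (s : ℝ)) * (P r * Q s - Q r * P s)
      = 2 * ∑ r ∈ Finset.Icc 1 (lj - 1), (B r * φ (r + 1) - φ r * B (r + 1)) := by
  set F : ℕ → ℕ → ℝ := fun r s => Real.sign ((r : ℝ) - (s : ℝ)) * (P r * Q s - Q r * P s)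
    with hF
  have hsymm : ∀ r s, F r s = F s r := by
    intro r s
    rw [hF]
    simp only []
    rw [show (s : ℝ) - (r : ℝ) = -((r : ℝ) - (s : ℝ)) by ring, Real.sign_neg]
    ring
  have hdiag : ∀ r, F r r = 0 := by
    intro r
    rw [hF]
    simp [sub_self]
  rw [double_sum_symm F hsymm hdiag lj]
  congr 1
  have hinner : ∀ r, r < lj → ∑ s ∈ Finset.range r, F r s
      = B r * φ (r + 1) - φ r * B (r + 1) := by
    intro r hr
    have hstep : ∀ s ∈ Finset.range r, F r s
        = Q r * (B (s + 1) - B s) - (B (r + 1) - B r) * Q s := by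
      intro s hs
      have hsr : s < r := Finset.mem_range.mp hs
      have hslj : s < lj := lt_trans hsr hr
      rw [hF]
      simp only []
      rw [Real.sign_of_pos (by
        have : (s : ℝ) < (r : ℝ) := Nat.cast_lt.mpr hsr
        linarith), one_mul, hP r hr, hP s hslj]
      ring
    rw [Finset.sum_congr rfl hstep, Finset.sum_sub_distrib, ← Finset.mul_sum, ← Finset.mul_sum,
      Finset.sum_range_sub (fun i => B i)]
    have hQs : ∑ s ∈ Finset.range r, Q s = φ r - φ 0 := by
      rw [← Finset.sum_range_sub (fun i => φ i)]
      apply Finset.sum_congr rfl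
      intro s hs
      exact hQ s (lt_trans (Finset.mem_range.mp hs) hr)
    rw [hQs, hB0, hφ0, hQ r hr]
    ring
  rw [Finset.sum_congr rfl (fun r hr => hinner r (Finset.mem_range.mp hr))]
  have h1lj : 1 ≤ lj := le_trans one_le_two hlj
  rw [Finset.range_eq_Ico, Finset.sum_eq_sum_Ico_succ_bot (by omega : 0 < lj)]
  rw [hB0, hφ0]
  have : Finset.Ico 1 lj = Finset.Icc 1 (lj - 1) := by
    rw [← Finset.Ico_add_one_right_eq_Icc]
    congr 1
    omega
  rw [← this]
  ring

/-- novel bridging function for an ordinal–binary pair with an arbitrary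
number of levels, `F_ob` (Theorem 1).  For `r = l_j − 1` the conventions
`Φ(Δ_{j l_j}) = Φ(+∞) = 1` and `Φ₂(+∞, Δₖ; ρ) = Φ(Δₖ)` are built into the
extended-real versions `stdPhi` and `Phi2`. -/
theorem kendall_tau_ordinal_binary
    {Ω : Type*} [MeasurableSpace Ω] (μ : Measure Ω) [IsProbabilityMeasure μ]
    (ρ : ℝ) (hρ : ρ ∈ Set.Ioo (-1 : ℝ) 1)
    (lj : ℕ) (hlj : 2 ≤ lj) (Δj : ℕ → EReal)
    (hΔj0 : Δj 0 = ⊥) (hΔjl : Δj lj = ⊤) (hΔjmono : ∀ m < lj, Δj m < Δj (m + 1))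
    (Δk : ℝ)
    (Z Z' : Ω → Fin 2 → ℝ) (hZm : Measurable Z) (hZ'm : Measurable Z')
    (hZ : Measure.map Z μ = mvGauss (corrMat ρ))
    (hZ' : Measure.map Z' μ = mvGauss (corrMat ρ))
    (hind : IndepFun Z Z' μ) :
    ∫ ω, Real.sign ((ordVar lj Δj (Z ω 0) - ordVar lj Δj (Z' ω 0)) *
        (binVar Δk (Z ω 1) - binVar Δk (Z' ω 1))) ∂μ
      = 2 * ∑ r ∈ Finset.Icc 1 (lj - 1),
          (Phi2 (Δj r) (Δk : EReal) ρ * stdPhi (Δj (r + 1))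
            - stdPhi (Δj r) * Phi2 (Δj (r + 1)) (Δk : EReal) ρ) := by
  classical
  haveI hνP := mvGauss_prob hρ
  set ν := mvGauss (corrMat ρ) with hνdef
  set A : ℕ → Set (Fin 2 → ℝ) :=
    fun m => {x | Δj m ≤ (x 0 : EReal) ∧ (x 0 : EReal) < Δj (m + 1)} with hAdef
  set K : Set (Fin 2 → ℝ) := {x | Δk < x 1} with hKdef
  have hAm : ∀ m, MeasurableSet (A m) := fun m =>
    (((measurable_coe_real_ereal.comp (measurable_pi_apply 0)) measurableSet_Ici).inter
      ((measurable_coe_real_ereal.comp (measurable_pi_apply 0)) measurableSet_Iio))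
  have hKm : MeasurableSet K := (measurable_pi_apply 1) measurableSet_Ioi
  have hAKm : ∀ m, MeasurableSet (A m ∩ K) := fun m => (hAm m).inter hKm
  set H : (Fin 2 → ℝ) × (Fin 2 → ℝ) → ℝ := fun p =>
    Real.sign ((ordVar lj Δj (p.1 0) - ordVar lj Δj (p.2 0)) *
      (binVar Δk (p.1 1) - binVar Δk (p.2 1))) with hHdef
  have hHm : Measurable H := by
    apply measurable_sign.comp
    exact ((((measurable_ordVar lj Δj).comp measurable_fst).sub
      ((measurable_ordVar lj Δj).comp measurable_snd)).mul
      (((measurable_binVar Δk).comp measurable_fst).sub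
      ((measurable_binVar Δk).comp measurable_snd)))
  have hmap : Measure.map (fun ω => (Z ω, Z' ω)) μ = ν.prod ν := by
    rw [(indepFun_iff_map_prod_eq_prod_map_map hZm.aemeasurable hZ'm.aemeasurable).mp hind,
      hZ, hZ']
  have step1 : ∫ ω, Real.sign ((ordVar lj Δj (Z ω 0) - ordVar lj Δj (Z' ω 0)) *
      (binVar Δk (Z ω 1) - binVar Δk (Z' ω 1))) ∂μ = ∫ p, H p ∂(ν.prod ν) := by
    rw [← hmap, integral_map (hZm.prodMk hZ'm).aemeasurable hHm.aestronglyMeasurable]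
  rw [step1]
  have hptw : ∀ p : (Fin 2 → ℝ) × (Fin 2 → ℝ), H p
      = ∑ r ∈ Finset.range lj, ∑ s ∈ Finset.range lj,
          Real.sign ((r : ℝ) - (s : ℝ)) *
            ((A r ∩ K).indicator (fun _ => (1:ℝ)) p.1 * (A s).indicator (fun _ => (1:ℝ)) p.2
              - (A r).indicator (fun _ => (1:ℝ)) p.1
                * ((A s ∩ K).indicator (fun _ => (1:ℝ)) p.2)) := fun p =>
    key_pointwise (le_trans one_le_two hlj) hΔj0 hΔjl hΔjmono A K hAdef hKdef p.1 p.2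
  rw [integral_congr_ae (Filter.Eventually.of_forall hptw)]
  have hindInt : ∀ S T : Set (Fin 2 → ℝ), MeasurableSet S → MeasurableSet T →
      Integrable (fun p : (Fin 2 → ℝ) × (Fin 2 → ℝ) =>
        S.indicator (fun _ => (1:ℝ)) p.1 * T.indicator (fun _ => (1:ℝ)) p.2) (ν.prod ν) :=
    fun S T hS hT =>
      ((integrable_const (1:ℝ)).indicator hS).mul_prod ((integrable_const (1:ℝ)).indicator hT)
  have hterm : ∀ r s : ℕ, Integrable (fun p : (Fin 2 → ℝ) × (Fin 2 → ℝ) =>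
      Real.sign ((r : ℝ) - (s : ℝ)) *
        ((A r ∩ K).indicator (fun _ => (1:ℝ)) p.1 * (A s).indicator (fun _ => (1:ℝ)) p.2
          - (A r).indicator (fun _ => (1:ℝ)) p.1
            * ((A s ∩ K).indicator (fun _ => (1:ℝ)) p.2))) (ν.prod ν) := fun r s =>
    (((hindInt _ _ (hAKm r) (hAm s)).sub (hindInt _ _ (hAm r) (hAKm s))).const_mul _)
  rw [integral_finset_sum _ (fun r _ => integrable_finset_sum _ (fun s _ => hterm r s))]
  have hswap : ∀ r : ℕ, ∫ p, (∑ s ∈ Finset.range lj,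
      Real.sign ((r : ℝ) - (s : ℝ)) *
        ((A r ∩ K).indicator (fun _ => (1:ℝ)) p.1 * (A s).indicator (fun _ => (1:ℝ)) p.2
          - (A r).indicator (fun _ => (1:ℝ)) p.1
            * ((A s ∩ K).indicator (fun _ => (1:ℝ)) p.2))) ∂(ν.prod ν)
      = ∑ s ∈ Finset.range lj, ∫ p,
          Real.sign ((r : ℝ) - (s : ℝ)) *
            ((A r ∩ K).indicator (fun _ => (1:ℝ)) p.1 * (A s).indicator (fun _ => (1:ℝ)) p.2
              - (A r).indicator (fun _ => (1:ℝ)) p.1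
                * ((A s ∩ K).indicator (fun _ => (1:ℝ)) p.2)) ∂(ν.prod ν) := fun r =>
    integral_finset_sum _ (fun s _ => hterm r s)
  simp_rw [hswap]
  have hint1 : ∀ S T : Set (Fin 2 → ℝ), MeasurableSet S → MeasurableSet T →
      ∫ p : (Fin 2 → ℝ) × (Fin 2 → ℝ),
        S.indicator (fun _ => (1:ℝ)) p.1 * T.indicator (fun _ => (1:ℝ)) p.2 ∂(ν.prod ν)
      = (ν S).toReal * (ν T).toReal := by
    intro S T hS hT
    rw [integral_prod_mul (μ := ν) (ν := ν) (S.indicator (fun _ => (1:ℝ)))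
      (T.indicator (fun _ => (1:ℝ)))]
    rw [integral_indicator_const (1:ℝ) hS, integral_indicator_const (1:ℝ) hT]
    simp
    rfl
  have hval : ∀ r s : ℕ, ∫ p : (Fin 2 → ℝ) × (Fin 2 → ℝ),
      Real.sign ((r : ℝ) - (s : ℝ)) *
        ((A r ∩ K).indicator (fun _ => (1:ℝ)) p.1 * (A s).indicator (fun _ => (1:ℝ)) p.2
          - (A r).indicator (fun _ => (1:ℝ)) p.1
            * ((A s ∩ K).indicator (fun _ => (1:ℝ)) p.2)) ∂(ν.prod ν)
      = Real.sign ((r : ℝ) - (s : ℝ)) *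
          ((ν (A r ∩ K)).toReal * (ν (A s)).toReal
            - (ν (A r)).toReal * (ν (A s ∩ K)).toReal) := by
    intro r s
    rw [integral_const_mul, integral_sub (hindInt _ _ (hAKm r) (hAm s))
      (hindInt _ _ (hAm r) (hAKm s)), hint1 _ _ (hAKm r) (hAm s), hint1 _ _ (hAm r) (hAKm s)]
  simp_rw [hval]
  -- now pure algebra
  have hφ0 : stdPhi (Δj 0) = 0 := by
    rw [hΔj0, stdPhi]
    rw [show {x : ℝ | (x : EReal) ≤ ⊥} = ∅ by
      ext x; simp [le_bot_iff, EReal.coe_ne_bot]]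
    simp
  have hB0 : Phi2 (Δj 0) (Δk : EReal) ρ = 0 := by
    rw [hΔj0, Phi2_eq]
    rw [show {x : Fin 2 → ℝ | (x 0 : EReal) ≤ ⊥ ∧ x 1 ≤ Δk} = ∅ by
      ext x; simp [le_bot_iff, EReal.coe_ne_bot]]
    simp
  have hQ : ∀ m, m < lj → (ν (A m)).toReal
      = stdPhi (Δj (m + 1)) - stdPhi (Δj m) := by
    intro m hm
    have h := slab_toReal hρ (le_of_lt (hΔjmono m hm)) (W := Set.univ) MeasurableSet.univ
    simp only [Set.inter_univ] at h
    rw [hAdef]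
    rw [h, ← stdPhi_eq hρ, ← stdPhi_eq hρ]
  have hKc : Kᶜ = {x : Fin 2 → ℝ | x 1 ≤ Δk} := by
    ext x
    simp [hKdef, not_lt]
  have hD : ∀ m, m < lj → (ν (A m ∩ Kᶜ)).toReal
      = Phi2 (Δj (m + 1)) (Δk : EReal) ρ - Phi2 (Δj m) (Δk : EReal) ρ := by
    intro m hm
    have hWm : MeasurableSet {x : Fin 2 → ℝ | x 1 ≤ Δk} :=
      (measurable_pi_apply 1) measurableSet_Iic
    have h := slab_toReal hρ (le_of_lt (hΔjmono m hm)) hWm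
    rw [hKc, hAdef]
    rw [h]
    rw [Phi2_eq (Δj (m+1)) Δk, Phi2_eq (Δj m) Δk]
    rw [Set.setOf_and, Set.setOf_and]
  have hP : ∀ m, m < lj → (ν (A m ∩ K)).toReal
      = (ν (A m)).toReal
        - (Phi2 (Δj (m + 1)) (Δk : EReal) ρ - Phi2 (Δj m) (Δk : EReal) ρ) := by
    intro m hm
    have h := measure_inter_add_diff (μ := ν) (A m) hKm
    rw [Set.diff_eq] at h
    have h' := congrArg ENNReal.toReal h
    rw [ENNReal.toReal_add (measure_ne_top _ _) (measure_ne_top _ _)] at h'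
    rw [hD m hm] at h'
    linarith
  exact algebra_step lj hlj (fun m => (ν (A m)).toReal) (fun m => (ν (A m ∩ K)).toReal)
    (fun m => Phi2 (Δj m) (Δk : EReal) ρ) (fun m => stdPhi (Δj m)) hQ hP hB0 hφ0
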